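/- For any set a, levof(a) = pot({levof(x) : x ∈ a}). Consequently, if every member of a is a level, then pot(a) = levof(a). -/
import Mathlib

def pot (a : ZFSet) : ZFSet :=
  ZFSet.sep (fun x => ∃ c ∈ a, x ⊆ c) (ZFSet.powerset (ZFSet.sUnion a))

def Potent (a : ZFSet) : Prop := ∀ x, (∃ c, x ⊆ c ∧ c ∈ a) → x ∈ a

def IsHistory (h : ZFSet) : Prop := ∀ x ∈ h, x = pot (x ∩ h)

def IsLevel (s : ZFSet) : Prop := ∃ h, IsHistory h ∧ s = pot h

noncomputable def levof (a : ZFSet) : ZFSet :=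
  Classical.epsilon (fun s => IsLevel s ∧ a ⊆ s ∧ ∀ t, IsLevel t → a ⊆ t → t ∉ s)

noncomputable instance : ZFSet.Definable₁ levof :=
  ZFSet.Definable₁.mk (fun p => (levof (ZFSet.mk p)).out) (fun _ => ZFSet.mk_out _)

/-! ### Basic facts about `pot` -/

theorem mem_pot {x a : ZFSet} : x ∈ pot a ↔ ∃ c ∈ a, x ⊆ c := by
  constructor
  · intro h
    exact (ZFSet.mem_sep.1 h).2
  · rintro ⟨c, hc, hxc⟩
    refine ZFSet.mem_sep.2 ⟨?_, c, hc, hxc⟩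
    rw [ZFSet.mem_powerset]
    intro z hz
    exact ZFSet.mem_sUnion.2 ⟨c, hc, hxc hz⟩

theorem pot_mono {a b : ZFSet} (h : a ⊆ b) : pot a ⊆ pot b := by
  intro x hx
  obtain ⟨c, hc, hxc⟩ := mem_pot.1 hx
  exact mem_pot.2 ⟨c, h hc, hxc⟩

theorem subset_pot {a : ZFSet} : a ⊆ pot a := fun c hc => mem_pot.2 ⟨c, hc, fun _ h => h⟩

/-- Members of a history are transitive (by ∈-induction). -/
theorem hist_mem_trans : ∀ c : ZFSet, ∀ h : ZFSet, IsHistory h → c ∈ h →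
    ∀ w ∈ c, w ⊆ c := by
  intro c
  induction c using ZFSet.inductionOn with
  | _ c IH =>
    intro h hh hch w hwc u huw
    have hc : c = pot (c ∩ h) := hh c hch
    obtain ⟨d, hd, hwd⟩ := mem_pot.1 (hc ▸ hwc)
    have hd' := ZFSet.mem_inter.1 hd
    have : u ⊆ d := IH d hd'.1 h hh hd'.2 u (hwd huw)
    rw [hc]
    exact mem_pot.2 ⟨d, hd, this⟩

/-- If `c ∈ h` where `h` is a history, then `c ∩ h` is a history. -/
theorem hist_inter (h : ZFSet) (hh : IsHistory h) {c : ZFSet} (hch : c ∈ h) :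
    IsHistory (c ∩ h) := by
  intro y hy
  obtain ⟨hyc, hyh⟩ := ZFSet.mem_inter.1 hy
  have h1 : y = pot (y ∩ h) := hh y hyh
  have h2 : y ∩ h = y ∩ (c ∩ h) := by
    apply ZFSet.ext
    intro z
    simp only [ZFSet.mem_inter]
    constructor
    · rintro ⟨hzy, hzh⟩
      exact ⟨hzy, hist_mem_trans c h hh hch y hyc hzy, hzh⟩
    · rintro ⟨hzy, _, hzh⟩
      exact ⟨hzy, hzh⟩
  rw [← h2] ; exact h1

/-- Members of a history are levels. -/
theorem hist_mem_level {h : ZFSet} (hh : IsHistory h) {c : ZFSet} (hch : c ∈ h) :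
    IsLevel c := ⟨c ∩ h, hist_inter h hh hch, hh c hch⟩

/-- Levels are transitive. -/
theorem level_trans {s : ZFSet} (hs : IsLevel s) {x : ZFSet} (hx : x ∈ s) : x ⊆ s := by
  obtain ⟨h, hh, rfl⟩ := hs
  obtain ⟨c, hch, hxc⟩ := mem_pot.1 hx
  intro z hz
  have hzc : z ∈ c := hxc hz
  rw [hh c hch] at hzc
  obtain ⟨d, hd, hzd⟩ := mem_pot.1 hzc
  exact mem_pot.2 ⟨d, (ZFSet.mem_inter.1 hd).2, hzd⟩

/-- Levels are potent. -/
theorem level_potent {s : ZFSet} (hs : IsLevel s) {x c : ZFSet} (hxc : x ⊆ c) (hcs : c ∈ s) :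
    x ∈ s := by
  obtain ⟨h, hh, rfl⟩ := hs
  obtain ⟨d, hd, hcd⟩ := mem_pot.1 hcs
  exact mem_pot.2 ⟨d, hd, fun z hz => hcd (hxc hz)⟩

/-- Member-levels of a level: if `s = pot h`, members of `h` are levels belonging to `s`. -/
theorem level_mem_structure {s : ZFSet} (hs : IsLevel s) {x : ZFSet} (hx : x ∈ s) :
    ∃ c, IsLevel c ∧ c ∈ s ∧ x ⊆ c := by
  obtain ⟨h, hh, rfl⟩ := hs
  obtain ⟨c, hch, hxc⟩ := mem_pot.1 hx
  exact ⟨c, hist_mem_level hh hch, subset_pot hch, hxc⟩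

/-- Trichotomy for levels. -/
theorem level_tri : ∀ s : ZFSet, ∀ t : ZFSet, IsLevel s → IsLevel t →
    s ∈ t ∨ s = t ∨ t ∈ s := by
  intro s
  induction s using ZFSet.inductionOn with
  | _ s IHs =>
    intro t
    induction t using ZFSet.inductionOn with
    | _ t IHt =>
      intro hs ht
      by_cases hst : s ∈ t
      · exact Or.inl hst
      by_cases hts : t ∈ s
      · exact Or.inr (Or.inr hts)
      refine Or.inr (Or.inl (ZFSet.ext fun x => ⟨?_, ?_⟩))
      · intro hx
        obtain ⟨c, hc, hcs, hxc⟩ := level_mem_structure hs hx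
        rcases IHs c hcs t hc ht with h1 | h1 | h1
        · exact level_potent ht hxc h1
        · exact absurd (h1 ▸ hcs) hts
        · exact absurd (level_trans hs hcs h1) hts
      · intro hx
        obtain ⟨d, hd, hdt, hxd⟩ := level_mem_structure ht hx
        rcases IHt d hdt hs hd with h1 | h1 | h1
        · exact absurd (level_trans ht hdt h1) hst
        · exact absurd (h1 ▸ hdt) hst
        · exact level_potent hs hxd h1

theorem level_subset_of_mem {s t : ZFSet} (ht : IsLevel t) (h : s ∈ t) : s ⊆ t :=
  level_trans ht h

/-- For levels, `s ⊆ t → s ∈ t ∨ s = t`. -/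
theorem level_mem_of_subset {s t : ZFSet} (hs : IsLevel s) (ht : IsLevel t) (h : s ⊆ t) :
    s ∈ t ∨ s = t := by
  rcases level_tri s t hs ht with h1 | h1 | h1
  · exact Or.inl h1
  · exact Or.inr h1
  · exact absurd (h h1) (ZFSet.mem_irrefl t)

/-- `pot` of a set of levels is a level. -/
theorem pot_level {A : ZFSet} (hA : ∀ x ∈ A, IsLevel x) : IsLevel (pot A) := by
  refine ⟨ZFSet.sep IsLevel (pot A), ?_, ?_⟩
  · intro s hsh
    obtain ⟨hsA, hsl⟩ := ZFSet.mem_sep.1 hsh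
    apply ZFSet.ext
    intro x
    constructor
    · intro hx
      obtain ⟨c, hc, hcs, hxc⟩ := level_mem_structure hsl hx
      refine mem_pot.2 ⟨c, ZFSet.mem_inter.2 ⟨hcs, ZFSet.mem_sep.2 ⟨?_, hc⟩⟩, hxc⟩
      -- c ∈ pot A : since s ∈ pot A, s ⊆ d ∈ A, c ∈ s so c ∈ d level, c ⊆ d
      obtain ⟨d, hdA, hsd⟩ := mem_pot.1 hsA
      exact mem_pot.2 ⟨d, hdA, level_trans (hA d hdA) (hsd hcs)⟩
    · intro hx
      obtain ⟨c, hc, hxc⟩ := mem_pot.1 hx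
      exact level_potent hsl hxc (ZFSet.mem_inter.1 hc).1
  · apply ZFSet.ext
    intro x
    constructor
    · intro hx
      obtain ⟨c, hcA, hxc⟩ := mem_pot.1 hx
      refine mem_pot.2 ⟨c, ZFSet.mem_sep.2 ⟨?_, hA c hcA⟩, hxc⟩
      exact subset_pot hcA
    · intro hx
      obtain ⟨c, hc, hxc⟩ := mem_pot.1 hx
      obtain ⟨hcA, _⟩ := ZFSet.mem_sep.1 hc
      obtain ⟨d, hdA, hcd⟩ := mem_pot.1 hcA
      exact mem_pot.2 ⟨d, hdA, fun z hz => hcd (hxc hz)⟩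

def LevSpec (a s : ZFSet) : Prop :=
  IsLevel s ∧ a ⊆ s ∧ ∀ t, IsLevel t → a ⊆ t → t ∉ s

/-- Every set is included in some level, and there is a least one. -/
theorem exists_levspec : ∀ a : ZFSet, ∃ s, LevSpec a s := by
  intro a
  induction a using ZFSet.inductionOn with
  | _ a IH =>
    -- levof x satisfies the spec for x ∈ a
    have hspec : ∀ x ∈ a, LevSpec x (levof x) := fun x hx =>
      Classical.epsilon_spec (IH x hx)
    set A := ZFSet.image levof a with hA
    have hAlev : ∀ x ∈ A, IsLevel x := by
      intro x hx
      obtain ⟨z, hz, rfl⟩ := ZFSet.mem_image.1 hx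
      exact (hspec z hz).1
    have hVlev : IsLevel (pot A) := pot_level hAlev
    have haV : a ⊆ pot A := by
      intro x hx
      exact mem_pot.2 ⟨levof x, ZFSet.mem_image.2 ⟨x, hx, rfl⟩, (hspec x hx).2.1⟩
    -- take an ∈-minimal level containing a, among levels in `insert (pot A) (pot A)`
    set S : Set ZFSet := {s | IsLevel s ∧ a ⊆ s ∧ s ∈ insert (pot A) (pot A)} with hS
    have hne : S.Nonempty := ⟨pot A, hVlev, haV, ZFSet.mem_insert_iff.2 (Or.inl rfl)⟩
    obtain ⟨s0, hs0, hmin⟩ := ZFSet.mem_wf.has_min S hne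
    refine ⟨s0, hs0.1, hs0.2.1, ?_⟩
    intro t htl hat hts0
    apply hmin t _ hts0
    refine ⟨htl, hat, ?_⟩
    rcases ZFSet.mem_insert_iff.1 hs0.2.2 with h1 | h1
    · exact ZFSet.mem_insert_iff.2 (Or.inr (h1 ▸ hts0))
    · exact ZFSet.mem_insert_iff.2 (Or.inr (level_trans hVlev h1 hts0))

theorem levof_spec (a : ZFSet) : LevSpec a (levof a) :=
  Classical.epsilon_spec (exists_levspec a)

theorem levspec_unique {a s t : ZFSet} (hs : LevSpec a s) (ht : LevSpec a t) : s = t := by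
  rcases level_tri s t hs.1 ht.1 with h | h | h
  · exact absurd h (ht.2.2 s hs.1 hs.2.1)
  · exact h
  · exact absurd h (hs.2.2 t ht.1 ht.2.1)

/-- If `x ∈ t` and `t` is a level then `levof x ∈ t`. -/
theorem levof_mem {t x : ZFSet} (ht : IsLevel t) (hx : x ∈ t) : levof x ∈ t := by
  obtain ⟨c, hcl, hct, hxc⟩ := level_mem_structure ht hx
  have h1 : c ∉ levof x := (levof_spec x).2.2 c hcl hxc
  rcases level_tri (levof x) c (levof_spec x).1 hcl with h | h | h
  · exact level_trans ht hct h
  · exact h ▸ hct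
  · exact absurd h h1

theorem stmt12 (a : ZFSet) :
    levof a = pot (ZFSet.image levof a) ∧
    ((∀ x ∈ a, IsLevel x) → pot a = levof a) := by
  constructor
  · apply levspec_unique (levof_spec a)
    have hAlev : ∀ x ∈ ZFSet.image levof a, IsLevel x := by
      intro x hx
      obtain ⟨z, _, rfl⟩ := ZFSet.mem_image.1 hx
      exact (levof_spec z).1
    refine ⟨pot_level hAlev, ?_, ?_⟩
    · intro x hx
      exact mem_pot.2 ⟨levof x, ZFSet.mem_image.2 ⟨x, hx, rfl⟩, (levof_spec x).2.1⟩
    · intro t htl hat htmem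
      obtain ⟨c, hc, htc⟩ := mem_pot.1 htmem
      obtain ⟨x, hxa, rfl⟩ := ZFSet.mem_image.1 hc
      have hxt : x ∈ t := hat hxa
      have : levof x ∈ t := levof_mem htl hxt
      exact ZFSet.mem_irrefl _ (htc this)
  · intro hlev
    apply levspec_unique _ (levof_spec a)
    refine ⟨pot_level hlev, subset_pot, ?_⟩
    intro t htl hat htmem
    obtain ⟨c, hca, htc⟩ := mem_pot.1 htmem
    have hct : c ∈ t := hat hca
    exact ZFSet.mem_irrefl c (htc hct)
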